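/- If the underlying probabilities (p_j) are non-decreasing, then the optimal values satisfy V(n) ≤ V(n+1) for all n ≥ 1. -/

import Mathlib

noncomputable def Rsum (p : ℕ → ℝ) (k n : ℕ) : ℝ := ∑ j ∈ Finset.Icc k n, p j / (1 - p j)

noncomputable def Qprod (p : ℕ → ℝ) (k n : ℕ) : ℝ := ∏ j ∈ Finset.Icc k n, (1 - p j)

open scoped Classical in
noncomputable def thr (p : ℕ → ℝ) (n : ℕ) : ℕ :=
  if Rsum p 1 n ≤ 1 then 1 else Nat.findGreatest (fun k => 1 ≤ Rsum p k n) n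

noncomputable def Val (p : ℕ → ℝ) (n : ℕ) : ℝ := Qprod p (thr p n) n * Rsum p (thr p n) n

section Aux

variable {p : ℕ → ℝ}

lemma q_pos (hp1 : ∀ j, p j < 1) (j : ℕ) : 0 < 1 - p j := by linarith [hp1 j]

lemma r_nonneg (hp0 : ∀ j, 0 ≤ p j) (hp1 : ∀ j, p j < 1) (j : ℕ) :
    0 ≤ p j / (1 - p j) :=
  div_nonneg (hp0 j) (le_of_lt (q_pos hp1 j))

lemma Qpos (hp1 : ∀ j, p j < 1) (k n : ℕ) : 0 < Qprod p k n :=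
  Finset.prod_pos (fun j _ => q_pos hp1 j)

lemma Rnonneg (hp0 : ∀ j, 0 ≤ p j) (hp1 : ∀ j, p j < 1) (k n : ℕ) :
    0 ≤ Rsum p k n :=
  Finset.sum_nonneg (fun j _ => r_nonneg hp0 hp1 j)

lemma R_anti (hp0 : ∀ j, 0 ≤ p j) (hp1 : ∀ j, p j < 1) {k k' : ℕ} (n : ℕ)
    (h : k ≤ k') : Rsum p k' n ≤ Rsum p k n :=
  Finset.sum_le_sum_of_subset_of_nonneg (Finset.Icc_subset_Icc_left h)
    (fun j _ _ => r_nonneg hp0 hp1 j)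

lemma R_top {k n : ℕ} (h : k ≤ n + 1) :
    Rsum p k (n + 1) = Rsum p k n + p (n + 1) / (1 - p (n + 1)) := by
  simp [Rsum, Finset.sum_Icc_succ_top h]

lemma Q_top {k n : ℕ} (h : k ≤ n + 1) :
    Qprod p k (n + 1) = Qprod p k n * (1 - p (n + 1)) := by
  simp [Qprod, Finset.prod_Icc_succ_top h]

lemma R_bot {k n : ℕ} (h : k ≤ n) :
    Rsum p k n = p k / (1 - p k) + Rsum p (k + 1) n := by
  rw [Rsum, Rsum, Finset.Icc_eq_cons_Ioc h, Finset.sum_cons, Finset.Icc_add_one_left_eq_Ioc]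

lemma Q_bot {k n : ℕ} (h : k ≤ n) :
    Qprod p k n = (1 - p k) * Qprod p (k + 1) n := by
  rw [Qprod, Qprod, Finset.Icc_eq_cons_Ioc h, Finset.prod_cons, Finset.Icc_add_one_left_eq_Ioc]

lemma R_empty (n : ℕ) : Rsum p (n + 1) n = 0 := by
  rw [Rsum, Finset.Icc_eq_empty (by omega), Finset.sum_empty]

lemma step (hp0 : ∀ j, 0 ≤ p j) (hp1 : ∀ j, p j < 1) {k m : ℕ} (hk : k ≤ m)
    (h1 : 1 ≤ Rsum p (k + 1) m) :
    Qprod p k m * Rsum p k m ≤ Qprod p (k + 1) m * Rsum p (k + 1) m := by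
  rw [Q_bot hk, R_bot hk]
  have hq : 0 < 1 - p k := q_pos hp1 k
  have hr : (1 - p k) * (p k / (1 - p k)) = p k := by field_simp
  have hQ : 0 < Qprod p (k + 1) m := Qpos hp1 (k + 1) m
  nlinarith [mul_nonneg (hp0 k) (sub_nonneg.2 h1), mul_nonneg (le_of_lt hQ)
    (mul_nonneg (hp0 k) (sub_nonneg.2 h1))]

lemma chain (hp0 : ∀ j, 0 ≤ p j) (hp1 : ∀ j, p j < 1) {a b m : ℕ}
    (hab : a ≤ b) : b ≤ m → 1 ≤ Rsum p b m →
    Qprod p a m * Rsum p a m ≤ Qprod p b m * Rsum p b m := by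
  induction b, hab using Nat.le_induction with
  | base => intro _ _; exact le_refl _
  | succ b hab ih =>
    intro hbm h1
    have hbm' : b ≤ m := by omega
    have h1' : 1 ≤ Rsum p b m := le_trans h1 (R_anti hp0 hp1 m (Nat.le_succ b))
    exact le_trans (ih hbm' h1') (step hp0 hp1 hbm' h1)

/-- same threshold index, horizon grows by one, when `R ≤ 1`. -/
lemma same_step (hp0 : ∀ j, 0 ≤ p j) (hp1 : ∀ j, p j < 1) {k n : ℕ}
    (hk : k ≤ n) (hR : Rsum p k n ≤ 1) :
    Qprod p k n * Rsum p k n ≤ Qprod p k (n + 1) * Rsum p k (n + 1) := by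
  rw [Q_top (by omega), R_top (by omega)]
  have hq : 0 < 1 - p (n + 1) := q_pos hp1 (n + 1)
  have hr : (1 - p (n + 1)) * (p (n + 1) / (1 - p (n + 1))) = p (n + 1) := by
    field_simp
  have hQ : 0 < Qprod p k n := Qpos hp1 k n
  nlinarith [mul_nonneg (hp0 (n + 1)) (sub_nonneg.2 hR), mul_nonneg (le_of_lt hQ)
    (mul_nonneg (hp0 (n + 1)) (sub_nonneg.2 hR))]

/-- cross step: from index `s` at horizon `n` to index `s+1` at horizon `n+1`. -/
lemma cross_step (hp0 : ∀ j, 0 ≤ p j) (hp1 : ∀ j, p j < 1) {s n : ℕ}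
    (hs : s ≤ n) (hR' : Rsum p (s + 1) n ≤ 1) (hps : p s ≤ p (n + 1)) :
    Qprod p s n * Rsum p s n ≤ Qprod p (s + 1) (n + 1) * Rsum p (s + 1) (n + 1) := by
  rw [Q_bot hs, R_bot hs, Q_top (by omega), R_top (by omega)]
  have hqs : 0 < 1 - p s := q_pos hp1 s
  have hqb : 0 < 1 - p (n + 1) := q_pos hp1 (n + 1)
  have hrs : (1 - p s) * (p s / (1 - p s)) = p s := by field_simp
  have hrb : (1 - p (n + 1)) * (p (n + 1) / (1 - p (n + 1))) = p (n + 1) := by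
    field_simp
  have hQ : 0 < Qprod p (s + 1) n := Qpos hp1 (s + 1) n
  nlinarith [mul_nonneg (sub_nonneg.2 hps) (sub_nonneg.2 hR'), mul_nonneg
    (le_of_lt hQ) (mul_nonneg (sub_nonneg.2 hps) (sub_nonneg.2 hR'))]

lemma r_mono (hp0 : ∀ j, 0 ≤ p j) (hp1 : ∀ j, p j < 1) {i j : ℕ}
    (hpm : p i ≤ p j) : p i / (1 - p i) ≤ p j / (1 - p j) :=
  div_le_div₀ (hp0 j) hpm (q_pos hp1 j) (by linarith)

end Aux

theorem stmt_7 (p : ℕ → ℝ) (hp0 : ∀ j, 0 ≤ p j) (hp1 : ∀ j, p j < 1)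
    (hmono : ∀ j, p j ≤ p (j + 1)) (n : ℕ) (hn : 1 ≤ n) :
    Val p n ≤ Val p (n + 1) := by
  classical
  have hpm : Monotone p := monotone_nat_of_le_succ hmono
  by_cases hA : Rsum p 1 n ≤ 1
  · have hthr : thr p n = 1 := by rw [thr, if_pos hA]
    by_cases hA2 : Rsum p 1 (n + 1) ≤ 1
    · have hthr2 : thr p (n + 1) = 1 := by rw [thr, if_pos hA2]
      rw [Val, Val, hthr, hthr2]
      exact same_step hp0 hp1 hn hA
    · set t := Nat.findGreatest (fun k => 1 ≤ Rsum p k (n + 1)) (n + 1) with ht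
      have hthr2 : thr p (n + 1) = t := by rw [thr, if_neg hA2]
      have h1t : 1 ≤ t :=
        Nat.le_findGreatest (by omega) (le_of_lt (not_le.1 hA2))
      have htn : t ≤ n + 1 := Nat.findGreatest_le (n + 1)
      have hRt : 1 ≤ Rsum p t (n + 1) := by
        rw [ht]
        exact Nat.findGreatest_spec (P := fun k => 1 ≤ Rsum p k (n + 1)) (m := 1)
          (by omega) (le_of_lt (not_le.1 hA2))
      rw [Val, Val, hthr, hthr2]
      calc Qprod p 1 n * Rsum p 1 n
          ≤ Qprod p 1 (n + 1) * Rsum p 1 (n + 1) := same_step hp0 hp1 hn hA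
        _ ≤ Qprod p t (n + 1) * Rsum p t (n + 1) := chain hp0 hp1 h1t htn hRt
  · set s := Nat.findGreatest (fun k => 1 ≤ Rsum p k n) n with hs
    have hthr : thr p n = s := by rw [thr, if_neg hA]
    have h1s : 1 ≤ s := Nat.le_findGreatest hn (le_of_lt (not_le.1 hA))
    have hsn : s ≤ n := Nat.findGreatest_le n
    have hRs : 1 ≤ Rsum p s n := by
      rw [hs]
      exact Nat.findGreatest_spec (P := fun k => 1 ≤ Rsum p k n) (m := 1) hn
        (le_of_lt (not_le.1 hA))
    have hRs1 : Rsum p (s + 1) n ≤ 1 := by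
      rcases eq_or_lt_of_le hsn with h | h
      · rw [h, R_empty]; norm_num
      · have h2 := Nat.findGreatest_is_greatest (P := fun k => 1 ≤ Rsum p k n)
          (n := n) (k := s + 1) (by rw [← hs]; omega) (by omega)
        exact le_of_not_ge h2
    have hA2 : ¬ Rsum p 1 (n + 1) ≤ 1 := by
      have h1 : Rsum p 1 (n + 1) = Rsum p 1 n + p (n + 1) / (1 - p (n + 1)) :=
        R_top (by omega)
      have := r_nonneg hp0 hp1 (n + 1)
      push_neg at hA ⊢
      linarith
    set t := Nat.findGreatest (fun k => 1 ≤ Rsum p k (n + 1)) (n + 1) with ht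
    have hthr2 : thr p (n + 1) = t := by rw [thr, if_neg hA2]
    -- R(s+1, n+1) = R(s,n) - r s + r (n+1) ≥ R(s,n) ≥ 1
    have hRs1n1 : 1 ≤ Rsum p (s + 1) (n + 1) := by
      have e1 : Rsum p (s + 1) (n + 1)
          = Rsum p (s + 1) n + p (n + 1) / (1 - p (n + 1)) := R_top (by omega)
      have e2 : Rsum p s n = p s / (1 - p s) + Rsum p (s + 1) n := R_bot hsn
      have hr : p s / (1 - p s) ≤ p (n + 1) / (1 - p (n + 1)) :=
        r_mono hp0 hp1 (hpm (by omega))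
      linarith
    have hst : s + 1 ≤ t := Nat.le_findGreatest (by omega) hRs1n1
    have htn : t ≤ n + 1 := Nat.findGreatest_le (n + 1)
    have hRt : 1 ≤ Rsum p t (n + 1) := by
      rw [ht]
      exact Nat.findGreatest_spec (P := fun k => 1 ≤ Rsum p k (n + 1)) (m := s + 1)
        (by omega) hRs1n1
    rw [Val, Val, hthr, hthr2]
    calc Qprod p s n * Rsum p s n
        ≤ Qprod p (s + 1) (n + 1) * Rsum p (s + 1) (n + 1) :=
          cross_step hp0 hp1 hsn hRs1 (hpm (by omega))
      _ ≤ Qprod p t (n + 1) * Rsum p t (n + 1) := chain hp0 hp1 hst htn hRt
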